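/- Let $N \ge 2$, $0 \le \beta < N$, $\gamma \le \beta$, $\gamma < N$, $\alpha_{N,\beta} = \frac{N-\beta}{N} N\omega_{N-1}^{1/(N-1)}$, and let $u_n$ be the Moser sequence with $A_n = \omega_{N-1}^{-1/N}(n/(N-\beta))^{-1/N}$ and $b_n = n/(N-\beta)$. Then for any $\alpha > 0$, $\int_{\mathbb{R}^N} \Phi_N(\alpha |u_n|^{N/(N-1)}) |x|^{-\beta} dx \ge \frac{\omega_{N-1}}{N-\beta} \Phi_N\!\left( \frac{\alpha}{\alpha_{N,\beta}} n \right) e^{-n}$. -/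

import Mathlib

open MeasureTheory ENNReal

noncomputable def Phi (N : ℕ) (t : ℝ) : ℝ :=
  Real.exp t - ∑ j ∈ Finset.range (N - 1), t ^ j / (Nat.factorial j)

/-- `‖∇u‖_{L^N}^N` (with the pointwise Fréchet gradient). -/
noncomputable def gradNormPow (N : ℕ) (u : EuclideanSpace ℝ (Fin N) → ℝ) : ℝ≥0∞ :=
  ∫⁻ x, ENNReal.ofReal (‖gradient u x‖ ^ N)

/-- `‖u‖_{N,γ}^N = ∫ |u|^N |x|^{-γ} dx`. -/
noncomputable def wNormPow (N : ℕ) (γ : ℝ) (u : EuclideanSpace ℝ (Fin N) → ℝ) : ℝ≥0∞ :=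
  ∫⁻ x, ENNReal.ofReal (|u x| ^ N * ‖x‖ ^ (-γ))

/-- `∫ Φ_N(α |u|^{N/(N-1)}) |x|^{-β} dx`. -/
noncomputable def PhiInt (N : ℕ) (β α : ℝ) (u : EuclideanSpace ℝ (Fin N) → ℝ) : ℝ≥0∞ :=
  ∫⁻ x, ENNReal.ofReal (Phi N (α * |u x| ^ ((N : ℝ) / ((N : ℝ) - 1))) * ‖x‖ ^ (-β))

noncomputable def sphereArea (N : ℕ) : ℝ :=
  N * (volume (Metric.ball (0 : EuclideanSpace ℝ (Fin N)) 1)).toReal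

/-- `α_N = N ω_{N-1}^{1/(N-1)}`. -/
noncomputable def alphaN (N : ℕ) : ℝ := N * (sphereArea N) ^ ((1 : ℝ) / ((N : ℝ) - 1))

/-- `α_{N,β} = ((N-β)/N) α_N`. -/
noncomputable def alphaNB (N : ℕ) (β : ℝ) : ℝ := (((N : ℝ) - β) / N) * alphaN N

/-- The weighted Adachi-Tanaka supremum `Ã(N, α, β, γ)`. -/
noncomputable def AT (N : ℕ) (α β γ : ℝ) : ℝ≥0∞ :=
  sSup { I : ℝ≥0∞ | ∃ u : EuclideanSpace ℝ (Fin N) → ℝ,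
    gradNormPow N u ≠ ⊤ ∧ wNormPow N γ u ≠ ⊤ ∧ wNormPow N γ u ≠ 0 ∧
    gradNormPow N u ≤ 1 ∧
    I = (wNormPow N γ u) ^ (-(((N : ℝ) - β) / ((N : ℝ) - γ))) * PhiInt N β α u }

/-- The weighted Li-Ruf supremum `B̃(N, β, γ)` at the critical exponent `α_{N,β}`. -/
noncomputable def LR (N : ℕ) (β γ : ℝ) : ℝ≥0∞ :=
  sSup { I : ℝ≥0∞ | ∃ u : EuclideanSpace ℝ (Fin N) → ℝ,
    gradNormPow N u + wNormPow N γ u ≤ 1 ∧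
    I = PhiInt N β (alphaNB N β) u }

noncomputable def moser (N : ℕ) (β : ℝ) (n : ℕ) (x : EuclideanSpace ℝ (Fin N)) : ℝ :=
  let b : ℝ := n / ((N : ℝ) - β)
  let A : ℝ := (sphereArea N) ^ (-(1 : ℝ) / N) * b ^ (-(1 : ℝ) / N)
  if ‖x‖ < Real.exp (-b) then A * b
  else if ‖x‖ < 1 then A * Real.log (1 / ‖x‖)
  else 0

section aux
open Measure Set Metric

lemma Phi_nonneg (N : ℕ) {t : ℝ} (ht : 0 ≤ t) : 0 ≤ Phi N t := by
  rw [Phi, sub_nonneg]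
  exact Real.sum_le_exp_of_nonneg ht _

lemma lintegral_fun_norm_aux {E : Type*} [NormedAddCommGroup E] [NormedSpace ℝ E]
    [MeasurableSpace E] [BorelSpace E] [FiniteDimensional ℝ E] [Nontrivial E]
    (μ : Measure E) [μ.IsAddHaarMeasure] (f : ℝ → ℝ≥0∞) (hf : Measurable f) :
    ∫⁻ x, f ‖x‖ ∂μ = (Module.finrank ℝ E) * μ (ball 0 1) *
      ∫⁻ y in Ioi (0:ℝ), ENNReal.ofReal (y ^ (Module.finrank ℝ E - 1)) * f y := by
  have h1 : ∫⁻ x, f ‖x‖ ∂μ = ∫⁻ x : ({(0:E)}ᶜ : Set E), f ‖x.1‖ ∂(μ.comap (↑)) := by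
    rw [lintegral_subtype_comap (measurableSet_singleton (0:E)).compl (fun x => f ‖x‖),
      restrict_compl_singleton]
  have hmeas : Measurable fun p : sphere (0:E) 1 × Ioi (0:ℝ) => f p.2.1 :=
    hf.comp (measurable_subtype_coe.comp measurable_snd)
  have h2 : ∫⁻ x : ({(0:E)}ᶜ : Set E), f ‖x.1‖ ∂(μ.comap (↑)) =
      ∫⁻ p : sphere (0:E) 1 × Ioi (0:ℝ), f p.2.1
        ∂(μ.toSphere.prod (volumeIoiPow (Module.finrank ℝ E - 1))) := by
    rw [← μ.measurePreserving_homeomorphUnitSphereProd.lintegral_comp hmeas]; simp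
  rw [h1, h2, lintegral_prod _ hmeas.aemeasurable]
  have h3 : ∫⁻ y : Ioi (0:ℝ), f y.1
      ∂(volumeIoiPow (Module.finrank ℝ E - 1)) =
      ∫⁻ y in Ioi (0:ℝ), ENNReal.ofReal (y ^ (Module.finrank ℝ E - 1)) * f y := by
    rw [volumeIoiPow, lintegral_withDensity_eq_lintegral_mul _
      (f := fun r : Ioi (0:ℝ) => ENNReal.ofReal (r.1 ^ (Module.finrank ℝ E - 1)))
      (by fun_prop) (g := fun y : Ioi (0:ℝ) => f y.1) (hf.comp measurable_subtype_coe)]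
    simp only [Pi.mul_apply]
    exact lintegral_subtype_comap measurableSet_Ioi
      (fun y => ENNReal.ofReal (y ^ (Module.finrank ℝ E - 1)) * f y)
  simp only [h3]
  rw [lintegral_const, toSphere_apply_univ, mul_comm]

end aux

theorem moser_phi_integral_lower_bound (N : ℕ) (hN : 2 ≤ N) (β γ : ℝ)
    (hβ0 : 0 ≤ β) (hβ : β < N) (hγβ : γ ≤ β) (hγ : γ < N)
    (α : ℝ) (hα : 0 < α) (n : ℕ) (hn : 1 ≤ n) :
    ENNReal.ofReal
        (sphereArea N / ((N : ℝ) - β) * Phi N (α / alphaNB N β * n) * Real.exp (-(n : ℝ))) ≤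
      PhiInt N β α (moser N β n) := by
  have hN2 : (2:ℝ) ≤ (N:ℝ) := by exact_mod_cast hN
  have hN1 : (0:ℝ) < (N:ℝ) - 1 := by linarith
  have hNpos : (0:ℝ) < N := by linarith
  have hNne : (N:ℝ) ≠ 0 := ne_of_gt hNpos
  have hN1ne : (N:ℝ) - 1 ≠ 0 := ne_of_gt hN1
  have hNβ : (0:ℝ) < (N:ℝ) - β := by linarith
  have hn' : (0:ℝ) < n := by exact_mod_cast hn
  set b : ℝ := n / ((N:ℝ) - β) with hbdef
  have hb : 0 < b := div_pos hn' hNβ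
  set S : ℝ := sphereArea N with hSdef
  have hvol_ne_top : volume (Metric.ball (0 : EuclideanSpace ℝ (Fin N)) 1) ≠ ⊤ :=
    measure_ball_lt_top.ne
  have hvol_pos : 0 < volume (Metric.ball (0 : EuclideanSpace ℝ (Fin N)) 1) := by
    haveI : Nontrivial (EuclideanSpace ℝ (Fin N)) := by
      apply Module.nontrivial_of_finrank_pos (R := ℝ)
      rw [finrank_euclideanSpace_fin]; omega
    exact Metric.measure_ball_pos volume 0 one_pos
  have hS : 0 < S := by
    rw [hSdef, sphereArea]
    exact mul_pos hNpos (ENNReal.toReal_pos hvol_pos.ne' hvol_ne_top)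
  set A : ℝ := S ^ (-(1:ℝ)/N) * b ^ (-(1:ℝ)/N) with hAdef
  have hX : 0 < S ^ ((1:ℝ)/((N:ℝ)-1)) := Real.rpow_pos_of_pos hS _
  have hAb : 0 < A * b :=
    mul_pos (mul_pos (Real.rpow_pos_of_pos hS _) (Real.rpow_pos_of_pos hb _)) hb
  have halphaNB : alphaNB N β = ((N:ℝ) - β) * S ^ ((1:ℝ)/((N:ℝ)-1)) := by
    rw [alphaNB, alphaN, ← hSdef]
    field_simp
  have halphaNBpos : 0 < alphaNB N β := by rw [halphaNB]; positivity
  -- key exponent computation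
  have key : α * (A * b) ^ ((N:ℝ)/((N:ℝ)-1)) = α / alphaNB N β * n := by
    have hAb_eq : A * b = S ^ (-(1:ℝ)/N) * b ^ (((N:ℝ)-1)/N) := by
      rw [hAdef, mul_assoc]
      congr 1
      nth_rewrite 2 [← Real.rpow_one b]
      rw [← Real.rpow_add hb]
      congr 1
      field_simp
      ring
    rw [hAb_eq, Real.mul_rpow (by positivity) (by positivity),
      ← Real.rpow_mul hS.le, ← Real.rpow_mul hb.le]
    have e1 : -(1:ℝ)/N * ((N:ℝ)/((N:ℝ)-1)) = -(1/((N:ℝ)-1)) := by field_simp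
    have e2 : ((N:ℝ)-1)/N * ((N:ℝ)/((N:ℝ)-1)) = 1 := by field_simp
    rw [e1, e2, Real.rpow_one, Real.rpow_neg hS.le, halphaNB, hbdef]
    field_simp
  set c : ℝ := Phi N (α / alphaNB N β * n) with hcdef
  have hc : 0 ≤ c := Phi_nonneg N (by positivity)
  set r : ℝ := Real.exp (-b) with hrdef
  have hr : 0 < r := Real.exp_pos _
  set f : ℝ → ℝ≥0∞ := fun y => if y < r then ENNReal.ofReal (c * y ^ (-β)) else 0 with hfdef
  have hfm : Measurable f := by
    apply Measurable.ite (measurableSet_Iio)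
    · fun_prop
    · fun_prop
  -- Step 1 : pointwise bound
  have step1 : ∫⁻ x : EuclideanSpace ℝ (Fin N), f ‖x‖ ≤ PhiInt N β α (moser N β n) := by
    rw [PhiInt]
    apply lintegral_mono
    intro x
    by_cases hx : ‖x‖ < r
    · have hmx : moser N β n x = A * b := by
        simp only [moser, ← hbdef, ← hSdef, ← hAdef]
        rw [if_pos hx]
      rw [hfdef]
      simp only [if_pos hx]
      rw [hmx, abs_of_pos hAb, key, ← hcdef]
    · rw [hfdef]
      simp only [if_neg hx]
      exact bot_le
  -- Step 2 : compute the lower integral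
  haveI : Nontrivial (EuclideanSpace ℝ (Fin N)) := by
    apply Module.nontrivial_of_finrank_pos (R := ℝ)
    rw [finrank_euclideanSpace_fin]; omega
  have polar := lintegral_fun_norm_aux (volume : Measure (EuclideanSpace ℝ (Fin N))) f hfm
  rw [finrank_euclideanSpace_fin] at polar
  -- inner integral lower bound
  have hp : (-1:ℝ) < (N:ℝ) - 1 - β := by linarith
  have hNβ' : (N:ℝ) - 1 - β + 1 = (N:ℝ) - β := by ring
  have inner_eq : ∫⁻ y in Set.Ioo (0:ℝ) r, ENNReal.ofReal ((y:ℝ) ^ (N - 1)) * f y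
      = ENNReal.ofReal (c * (r ^ ((N:ℝ) - β) / ((N:ℝ) - β))) := by
    have hcongr : ∀ y ∈ Set.Ioo (0:ℝ) r,
        ENNReal.ofReal ((y:ℝ) ^ (N - 1)) * f y
          = ENNReal.ofReal (c * y ^ ((N:ℝ) - 1 - β)) := by
      intro y hy
      rw [hfdef]
      simp only [if_pos hy.2]
      rw [← ENNReal.ofReal_mul (pow_nonneg hy.1.le _)]
      congr 1
      have hpow : (y:ℝ) ^ (N - 1) = y ^ ((N:ℝ) - 1) := by
        rw [← Real.rpow_natCast y (N-1)]
        congr 1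
        push_cast [Nat.cast_sub (by omega : 1 ≤ N)]
        ring
      rw [hpow, mul_comm, mul_assoc, ← Real.rpow_add hy.1]
      ring_nf
    rw [setLIntegral_congr_fun measurableSet_Ioo hcongr]
    have hInt : IntegrableOn (fun y => c * y ^ ((N:ℝ) - 1 - β)) (Set.Ioo 0 r) := by
      rw [← intervalIntegrable_iff_integrableOn_Ioo_of_le hr.le]
      exact (intervalIntegral.intervalIntegrable_rpow' hp).const_mul c
    rw [← ofReal_integral_eq_lintegral_ofReal hInt ?nn]
    case nn =>
      filter_upwards [ae_restrict_mem measurableSet_Ioo] with y hy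
      have := Real.rpow_nonneg hy.1.le ((N:ℝ) - 1 - β)
      positivity
    congr 1
    rw [← integral_Ioc_eq_integral_Ioo, ← intervalIntegral.integral_of_le hr.le,
      intervalIntegral.integral_const_mul, integral_rpow (Or.inl hp),
      Real.zero_rpow (by rw [hNβ']; exact ne_of_gt hNβ), hNβ']
    ring
  have inner_ge : ENNReal.ofReal (c * (r ^ ((N:ℝ) - β) / ((N:ℝ) - β)))
      ≤ ∫⁻ y in Set.Ioi (0:ℝ), ENNReal.ofReal ((y:ℝ) ^ (N - 1)) * f y := by
    rw [← inner_eq]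
    exact lintegral_mono_set Set.Ioo_subset_Ioi_self
  -- assemble
  have hrpow : r ^ ((N:ℝ) - β) = Real.exp (-(n:ℝ)) := by
    rw [hrdef, ← Real.exp_mul]
    congr 1
    rw [hbdef]
    field_simp
  have hNvol : ((N:ℕ) : ℝ≥0∞) * volume (Metric.ball (0 : EuclideanSpace ℝ (Fin N)) 1)
      = ENNReal.ofReal S := by
    rw [hSdef, sphereArea, ENNReal.ofReal_mul hNpos.le, ENNReal.ofReal_natCast,
      ENNReal.ofReal_toReal hvol_ne_top]
  calc ENNReal.ofReal (S / ((N:ℝ) - β) * c * Real.exp (-(n:ℝ)))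
      = ENNReal.ofReal S * ENNReal.ofReal (c * (r ^ ((N:ℝ) - β) / ((N:ℝ) - β))) := by
        rw [← ENNReal.ofReal_mul hS.le, hrpow]
        congr 1
        field_simp
    _ ≤ ENNReal.ofReal S * ∫⁻ y in Set.Ioi (0:ℝ), ENNReal.ofReal ((y:ℝ) ^ (N - 1)) * f y :=
        mul_le_mul_right inner_ge _
    _ = ∫⁻ x : EuclideanSpace ℝ (Fin N), f ‖x‖ := by rw [← hNvol, ← polar]
    _ ≤ PhiInt N β α (moser N β n) := step1
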